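/- arXiv:1212.2701 — 2 statements merged into one kernel-verified Lean document; each statement's English description precedes it below -/
import Mathlib

section
/- For every unweighted, connected simple graph G on n ≥ 2 vertices and every integer k with 2 ≤ k ≤ n, the diameter of G satisfies λ_k · diam(G) ≤ 48 · k · log n, where λ_k is the k-th smallest eigenvalue of the normalized Laplacian of G and log denotes the natural logarithm. -/
open Finset Real

variable {V : Type*} [Fintype V] [DecidableEq V]

/-- The normalized Laplacian `I - D^{-1/2} A D^{-1/2}` of a simple graph. -/
noncomputable def normLap (G : SimpleGraph V) [DecidableRel G.Adj] : Matrix V V ℝ :=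
  1 - Matrix.diagonal (fun v => (Real.sqrt (G.degree v))⁻¹) * G.adjMatrix ℝ *
    Matrix.diagonal (fun v => (Real.sqrt (G.degree v))⁻¹)

lemma normLap_isHermitian (G : SimpleGraph V) [DecidableRel G.Adj] :
    (normLap G).IsHermitian := by
  unfold normLap
  apply Matrix.IsHermitian.sub (Matrix.isHermitian_one)
  rw [Matrix.IsHermitian, Matrix.conjTranspose_eq_transpose_of_trivial,
    Matrix.transpose_mul, Matrix.transpose_mul, Matrix.diagonal_transpose,
    G.transpose_adjMatrix, Matrix.mul_assoc]

/-- The `k`-th smallest eigenvalue (1-indexed) of the normalized Laplacian. -/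
noncomputable def normLapEigenvalue (G : SimpleGraph V) [DecidableRel G.Adj]
    (k : ℕ) (hk : k - 1 < Fintype.card V) : ℝ :=
  let f : Fin (Fintype.card V) → ℝ :=
    (normLap_isHermitian G).eigenvalues ∘ (Fintype.equivFin V).symm
  (f ∘ Tuple.sort f) ⟨k - 1, hk⟩

/-- Volume of a set of vertices: sum of degrees. -/
def vol (G : SimpleGraph V) [DecidableRel G.Adj] (S : Finset V) : ℕ :=
  ∑ v ∈ S, G.degree v

/-- Number of edges with exactly one endpoint in `S`. -/
def cut (G : SimpleGraph V) [DecidableRel G.Adj] (S : Finset V) : ℕ :=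
  ((S ×ˢ Sᶜ).filter fun p => G.Adj p.1 p.2).card

/-- Conductance of a set of vertices. -/
noncomputable def conductance (G : SimpleGraph V) [DecidableRel G.Adj] (S : Finset V) : ℝ :=
  (cut G S : ℝ) / min (vol G S) (vol G Sᶜ)

/-- Ball of radius `r` around a vertex in graph distance. -/
noncomputable def ball (G : SimpleGraph V) (v : V) (r : ℕ) : Finset V :=
  Finset.univ.filter fun u => G.dist v u ≤ r

/-- Set of vertices at distance at most `r` from a set `S`. -/
noncomputable def ballSet (G : SimpleGraph V) (S : Finset V) (r : ℕ) : Finset V :=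
  Finset.univ.filter fun u => ∃ w ∈ S, G.dist w u ≤ r

/-- Exterior neighborhood of `S`: vertices outside `S` adjacent to some vertex of `S`. -/
def nbhd (G : SimpleGraph V) [DecidableRel G.Adj] (S : Finset V) : Finset V :=
  Finset.univ.filter fun u => u ∉ S ∧ ∃ w ∈ S, G.Adj w u

section Aux

set_option linter.unusedSectionVars false

lemma le_card_eigenvalue_le {V : Type*} [Fintype V] [DecidableEq V]
    {A : Matrix V V ℝ} (hA : A.IsHermitian) {ρ : ℝ} {k : ℕ}
    (x : Fin k → (V → ℝ)) (hx : LinearIndependent ℝ x)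
    (hQ : ∀ c : Fin k → ℝ,
      dotProduct (∑ i, c i • x i) (A.mulVec (∑ i, c i • x i)) ≤
        ρ * dotProduct (∑ i, c i • x i) (∑ i, c i • x i)) :
    k ≤ Fintype.card {v : V // hA.eigenvalues v ≤ ρ} := by
  classical
  by_contra hcard
  push_neg at hcard
  set U : Matrix V V ℝ := (hA.eigenvectorUnitary : Matrix V V ℝ) with hU
  set M : Matrix {v : V // hA.eigenvalues v ≤ ρ} (Fin k) ℝ :=
    fun j i => dotProduct (fun v => U v j.1) (x i) with hM
  have hker : LinearMap.ker M.mulVecLin ≠ ⊥ := by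
    intro hbot
    have hinj : Function.Injective M.mulVecLin := LinearMap.ker_eq_bot.mp hbot
    have := LinearMap.finrank_le_finrank_of_injective hinj
    rw [Module.finrank_pi, Module.finrank_pi, Fintype.card_fin] at this
    omega
  obtain ⟨c, hc, hc0⟩ := (Submodule.ne_bot_iff _).1 hker
  set y : V → ℝ := ∑ i, c i • x i with hy
  have hy0 : y ≠ 0 := by
    intro h
    exact hc0 (funext fun i => Fintype.linearIndependent_iff.1 hx c (by rw [← hy, h]) i)
  set z : V → ℝ := Matrix.vecMul y U with hz
  have hMc : M.mulVec c = 0 := by rwa [LinearMap.mem_ker, Matrix.mulVecLin_apply] at hc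
  have hzc : ∀ j : {v : V // hA.eigenvalues v ≤ ρ}, z j.1 = 0 := by
    intro j
    have h2 := congrFun hMc j
    simp only [Matrix.mulVec, dotProduct, Pi.zero_apply] at h2
    rw [hz]
    simp only [Matrix.vecMul, dotProduct, hy, Finset.sum_apply, Pi.smul_apply,
      smul_eq_mul, Finset.sum_mul]
    rw [← h2, Finset.sum_comm]
    refine Finset.sum_congr rfl fun i _ => ?_
    simp only [hM, dotProduct, Finset.sum_mul]
    refine Finset.sum_congr rfl fun v _ => ?_
    ring
  have hstar : ∀ v u, (star U) v u = U u v := by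
    intro v u
    simp [Matrix.star_apply]
  have hzw : Matrix.mulVec (star U) y = z := by
    funext v
    simp only [Matrix.mulVec, dotProduct, hz, Matrix.vecMul, hstar]
    congr 1; ext u; ring
  have hUU : U * star U = 1 := (Matrix.mem_unitaryGroup_iff).mp hA.eigenvectorUnitary.2
  have hNz : dotProduct y y = ∑ v, z v ^ 2 := by
    calc dotProduct y y = dotProduct y ((U * star U).mulVec y) := by
          rw [hUU, Matrix.one_mulVec]
      _ = dotProduct y (U.mulVec ((star U).mulVec y)) := by
          rw [Matrix.mulVec_mulVec]
      _ = dotProduct (Matrix.vecMul y U) ((star U).mulVec y) :=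
          Matrix.dotProduct_mulVec _ _ _
      _ = dotProduct z z := by rw [hzw, ← hz]
      _ = ∑ v, z v ^ 2 := by simp [dotProduct, sq]
  have hQz : dotProduct y (A.mulVec y) = ∑ v, hA.eigenvalues v * z v ^ 2 := by
    set D : Matrix V V ℝ := Matrix.diagonal (RCLike.ofReal ∘ hA.eigenvalues) with hD
    calc dotProduct y (A.mulVec y)
        = dotProduct y ((U * D * star U).mulVec y) := by
          rw [hU, hD, ← Unitary.conjStarAlgAut_apply (S := ℝ), ← hA.spectral_theorem]
      _ = dotProduct y (U.mulVec (D.mulVec ((star U).mulVec y))) := by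
          rw [Matrix.mulVec_mulVec, Matrix.mulVec_mulVec]
      _ = dotProduct (Matrix.vecMul y U) (D.mulVec ((star U).mulVec y)) :=
          Matrix.dotProduct_mulVec _ _ _
      _ = dotProduct z (D.mulVec z) := by rw [hzw, ← hz]
      _ = ∑ v, hA.eigenvalues v * z v ^ 2 := by
          simp only [dotProduct, hD, Matrix.mulVec_diagonal, Function.comp_apply,
            RCLike.ofReal_real_eq_id, id_eq]
          congr 1; ext v; ring
  have hypos : 0 < dotProduct y y := by
    obtain ⟨v0, hv0⟩ := Function.ne_iff.1 hy0
    have : (0:ℝ) < y v0 * y v0 := mul_self_pos.2 hv0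
    exact Finset.sum_pos' (fun v _ => mul_self_nonneg _) ⟨v0, Finset.mem_univ _, this⟩
  have hzpos : 0 < ∑ v, z v ^ 2 := hNz ▸ hypos
  obtain ⟨v0, -, hv0⟩ : ∃ v ∈ Finset.univ, 0 < z v ^ 2 := by
    by_contra h
    push_neg at h
    have : ∑ v, z v ^ 2 ≤ 0 := Finset.sum_nonpos fun v hv => h v hv
    linarith
  have hv0ne : z v0 ≠ 0 := by
    intro h; rw [h] at hv0; simp at hv0
  have hmu : ρ < hA.eigenvalues v0 := by
    by_contra h
    push_neg at h
    exact hv0ne (hzc ⟨v0, h⟩)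
  have hterm : ∀ v, 0 ≤ (hA.eigenvalues v - ρ) * z v ^ 2 := by
    intro v
    rcases le_or_gt (hA.eigenvalues v) ρ with h | h
    · rw [hzc ⟨v, h⟩]; simp
    · exact mul_nonneg (by linarith) (sq_nonneg _)
  have hpos : 0 < ∑ v, (hA.eigenvalues v - ρ) * z v ^ 2 :=
    Finset.sum_pos' (fun v _ => hterm v)
      ⟨v0, Finset.mem_univ _, mul_pos (by linarith) hv0⟩
  have hle := hQ c
  rw [← hy] at hle
  rw [hQz, hNz] at hle
  have : ∑ v, (hA.eigenvalues v - ρ) * z v ^ 2 =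
      (∑ v, hA.eigenvalues v * z v ^ 2) - ρ * ∑ v, z v ^ 2 := by
    rw [Finset.mul_sum, ← Finset.sum_sub_distrib]
    congr 1; ext v; ring
  rw [this] at hpos
  linarith

lemma adj_row_sum (G : SimpleGraph V) [DecidableRel G.Adj] (v : V) :
    ∑ u, (if G.Adj v u then (1:ℝ) else 0) = G.degree v := by
  rw [Finset.sum_boole]
  congr 1
  rw [SimpleGraph.degree, SimpleGraph.neighborFinset_eq_filter]

lemma normLap_quadform (G : SimpleGraph V) [DecidableRel G.Adj] (hd : ∀ v, 0 < G.degree v)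
    (g : V → ℝ) :
    dotProduct (fun v => g v * Real.sqrt (G.degree v))
      ((normLap G).mulVec (fun v => g v * Real.sqrt (G.degree v))) =
    (∑ v, g v ^ 2 * (G.degree v : ℝ)) -
      ∑ v, ∑ u, (if G.Adj v u then (1:ℝ) else 0) * (g v * g u) := by
  classical
  set y : V → ℝ := fun v => g v * Real.sqrt (G.degree v) with hy
  have hs : ∀ v, Real.sqrt (G.degree v) ≠ 0 := fun v =>
    Real.sqrt_ne_zero'.2 (by exact_mod_cast hd v)
  have hDh : (Matrix.diagonal (fun v => (Real.sqrt (G.degree v))⁻¹)).mulVec y = g := by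
    funext v
    rw [Matrix.mulVec_diagonal]
    show (Real.sqrt (G.degree v))⁻¹ * (g v * Real.sqrt (G.degree v)) = g v
    rw [show (Real.sqrt (G.degree v))⁻¹ * (g v * Real.sqrt (G.degree v)) =
      (Real.sqrt (G.degree v) * (Real.sqrt (G.degree v))⁻¹) * g v by ring,
      mul_inv_cancel₀ (hs v), one_mul]
  rw [normLap, Matrix.sub_mulVec, Matrix.one_mulVec, dotProduct_sub]
  congr 1
  · simp only [dotProduct, hy]
    refine Finset.sum_congr rfl fun v _ => ?_
    show g v * Real.sqrt (G.degree v) * (g v * Real.sqrt (G.degree v)) = g v ^ 2 * (G.degree v : ℝ)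
    rw [show g v * Real.sqrt (G.degree v) * (g v * Real.sqrt (G.degree v)) =
      g v ^ 2 * (Real.sqrt (G.degree v) * Real.sqrt (G.degree v)) by ring,
      Real.mul_self_sqrt (by positivity)]
  · rw [← Matrix.mulVec_mulVec, ← Matrix.mulVec_mulVec, hDh]
    simp only [dotProduct, Matrix.mulVec_diagonal]
    refine Finset.sum_congr rfl fun v _ => ?_
    rw [G.adjMatrix_mulVec_apply v g]
    have hrhs : ∑ u, (if G.Adj v u then (1:ℝ) else 0) * (g v * g u) =
        g v * ∑ u ∈ G.neighborFinset v, g u := by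
      simp only [ite_mul, one_mul, zero_mul]
      rw [← Finset.sum_filter, SimpleGraph.neighborFinset_eq_filter, Finset.mul_sum]
    rw [hrhs]
    show g v * Real.sqrt (G.degree v) * ((Real.sqrt (G.degree v))⁻¹ * _) = _
    rw [show g v * Real.sqrt (G.degree v) * ((Real.sqrt (G.degree v))⁻¹ *
        (∑ u ∈ G.neighborFinset v, g u)) =
      (Real.sqrt (G.degree v) * (Real.sqrt (G.degree v))⁻¹) *
        (g v * ∑ u ∈ G.neighborFinset v, g u) by ring,
      mul_inv_cancel₀ (hs v), one_mul]

lemma quad_identity (G : SimpleGraph V) [DecidableRel G.Adj] (g : V → ℝ) :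
    (∑ v, g v ^ 2 * (G.degree v : ℝ)) -
      ∑ v, ∑ u, (if G.Adj v u then (1:ℝ) else 0) * (g v * g u) =
    (1/2) * ∑ v, ∑ u, (if G.Adj v u then (1:ℝ) else 0) * (g v - g u) ^ 2 := by
  classical
  have hsymm : ∀ v u : V, (if G.Adj v u then (1:ℝ) else 0) = (if G.Adj u v then (1:ℝ) else 0) := by
    intro v u
    by_cases h : G.Adj v u
    · rw [if_pos h, if_pos h.symm]
    · rw [if_neg h, if_neg fun hh => h hh.symm]
  have h1 : ∀ h : V → ℝ, ∑ v, ∑ u, (if G.Adj v u then (1:ℝ) else 0) * h v ^ 2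
      = ∑ v, h v ^ 2 * (G.degree v : ℝ) := by
    intro h
    refine Finset.sum_congr rfl fun v _ => ?_
    rw [← Finset.sum_mul, adj_row_sum, mul_comm]
  have h2 : ∑ v, ∑ u, (if G.Adj v u then (1:ℝ) else 0) * g u ^ 2
      = ∑ v, g v ^ 2 * (G.degree v : ℝ) := by
    rw [Finset.sum_comm, ← h1 g]
    refine Finset.sum_congr rfl fun v _ => Finset.sum_congr rfl fun u _ => ?_
    rw [hsymm]
  have expand : ∀ v u : V, (if G.Adj v u then (1:ℝ) else 0) * (g v - g u) ^ 2 =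
      (if G.Adj v u then (1:ℝ) else 0) * g v ^ 2 +
      (if G.Adj v u then (1:ℝ) else 0) * g u ^ 2 -
      2 * ((if G.Adj v u then (1:ℝ) else 0) * (g v * g u)) := fun v u => by ring
  simp only [expand, Finset.sum_sub_distrib, Finset.sum_add_distrib, ← Finset.mul_sum]
  rw [h1 g, h2]
  ring

lemma quad_le_two (G : SimpleGraph V) [DecidableRel G.Adj] (g : V → ℝ) :
    (1/2) * ∑ v, ∑ u, (if G.Adj v u then (1:ℝ) else 0) * (g v - g u) ^ 2 ≤
      2 * ∑ v, g v ^ 2 * (G.degree v : ℝ) := by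
  classical
  have hsymm : ∀ v u : V, (if G.Adj v u then (1:ℝ) else 0) = (if G.Adj u v then (1:ℝ) else 0) := by
    intro v u
    by_cases h : G.Adj v u
    · rw [if_pos h, if_pos h.symm]
    · rw [if_neg h, if_neg fun hh => h hh.symm]
  have h1 : ∀ h : V → ℝ, ∑ v, ∑ u, (if G.Adj v u then (1:ℝ) else 0) * h v ^ 2
      = ∑ v, h v ^ 2 * (G.degree v : ℝ) := by
    intro h
    refine Finset.sum_congr rfl fun v _ => ?_
    rw [← Finset.sum_mul, adj_row_sum, mul_comm]
  have h2 : ∑ v, ∑ u, (if G.Adj v u then (1:ℝ) else 0) * g u ^ 2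
      = ∑ v, g v ^ 2 * (G.degree v : ℝ) := by
    rw [Finset.sum_comm, ← h1 g]
    refine Finset.sum_congr rfl fun v _ => Finset.sum_congr rfl fun u _ => ?_
    rw [hsymm]
  have hterm : ∀ v u : V, (if G.Adj v u then (1:ℝ) else 0) * (g v - g u) ^ 2 ≤
      2 * ((if G.Adj v u then (1:ℝ) else 0) * g v ^ 2 +
        (if G.Adj v u then (1:ℝ) else 0) * g u ^ 2) := by
    intro v u
    by_cases h : G.Adj v u <;> simp [h] <;> nlinarith [sq_nonneg (g v + g u)]
  calc (1/2) * ∑ v, ∑ u, (if G.Adj v u then (1:ℝ) else 0) * (g v - g u) ^ 2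
      ≤ (1/2) * ∑ v, ∑ u, 2 * ((if G.Adj v u then (1:ℝ) else 0) * g v ^ 2 +
          (if G.Adj v u then (1:ℝ) else 0) * g u ^ 2) := by
        refine mul_le_mul_of_nonneg_left ?_ (by norm_num)
        exact Finset.sum_le_sum fun v _ => Finset.sum_le_sum fun u _ => hterm v u
    _ = ∑ v, ∑ u, ((if G.Adj v u then (1:ℝ) else 0) * g v ^ 2 +
          (if G.Adj v u then (1:ℝ) else 0) * g u ^ 2) := by
        rw [Finset.mul_sum]
        refine Finset.sum_congr rfl fun v _ => ?_
        rw [Finset.mul_sum]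
        refine Finset.sum_congr rfl fun u _ => ?_
        ring
    _ = 2 * ∑ v, g v ^ 2 * (G.degree v : ℝ) := by
        simp only [Finset.sum_add_distrib]
        rw [h1 g, h2]
        ring

lemma dist_getVert_le (G : SimpleGraph V) (hG : G.Connected) {a b : V} (w : G.Walk a b)
    (i j : ℕ) (hij : i ≤ j) : G.dist (w.getVert i) (w.getVert j) ≤ j - i := by
  have step : ∀ j : ℕ, G.dist (w.getVert j) (w.getVert (j+1)) ≤ 1 := by
    intro j
    rcases lt_or_ge j w.length with h | h
    · exact le_of_eq (SimpleGraph.dist_eq_one_iff_adj.2 (w.adj_getVert_succ h))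
    · rw [w.getVert_of_length_le h, w.getVert_of_length_le (by omega)]
      rw [SimpleGraph.dist_self]
      omega
  induction j, hij using Nat.le_induction with
  | base => simp
  | succ j hij ih =>
    have := hG.dist_triangle (u := w.getVert i) (v := w.getVert j) (w := w.getVert (j+1))
    have := step j
    omega

lemma dist_getVert_ge (G : SimpleGraph V) (hG : G.Connected) {a b : V} (w : G.Walk a b)
    (hw : w.length = G.dist a b) {i j : ℕ} (hij : i ≤ j) (hj : j ≤ w.length) :
    (j : ℕ) - i ≤ G.dist (w.getVert i) (w.getVert j) := by
  have h1 : G.dist a (w.getVert i) ≤ i := by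
    have := dist_getVert_le G hG w 0 i (Nat.zero_le _)
    simpa [w.getVert_zero] using this
  have h2 : G.dist (w.getVert j) b ≤ w.length - j := by
    have := dist_getVert_le G hG w j w.length hj
    simpa [w.getVert_length] using this
  have t1 := hG.dist_triangle (u := a) (v := w.getVert i) (w := b)
  have t2 := hG.dist_triangle (u := w.getVert i) (v := w.getVert j) (w := b)
  omega

lemma mem_ball_self (G : SimpleGraph V) (p : V) (r : ℕ) : p ∈ ball G p r := by
  simp [ball, SimpleGraph.dist_self]

lemma ball_mono (G : SimpleGraph V) (p : V) {r s : ℕ} (h : r ≤ s) :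
    ball G p r ⊆ ball G p s := by
  intro v hv
  simp only [ball, Finset.mem_filter] at hv ⊢
  exact ⟨hv.1, hv.2.trans h⟩

lemma vol_mono (G : SimpleGraph V) [DecidableRel G.Adj] {S T : Finset V} (h : S ⊆ T) :
    vol G S ≤ vol G T :=
  Finset.sum_le_sum_of_subset h

lemma one_le_vol_ball (G : SimpleGraph V) [DecidableRel G.Adj]
    (hd : ∀ v, 0 < G.degree v) (p : V) (r : ℕ) : 1 ≤ vol G (ball G p r) :=
  le_trans (hd p) (Finset.single_le_sum (f := fun v => G.degree v)
    (fun v _ => Nat.zero_le _) (mem_ball_self G p r))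

lemma vol_le_card (G : SimpleGraph V) [DecidableRel G.Adj] (S : Finset V) :
    vol G S ≤ Fintype.card V * (Fintype.card V - 1) := by
  calc vol G S ≤ vol G Finset.univ := vol_mono G (Finset.subset_univ S)
    _ ≤ ∑ _v : V, (Fintype.card V - 1) :=
        Finset.sum_le_sum fun v _ => Nat.le_sub_one_of_lt (G.degree_lt_card_verts v)
    _ = Fintype.card V * (Fintype.card V - 1) := by
        rw [Finset.sum_const, smul_eq_mul, Finset.card_univ]

lemma cut_eq_sum (G : SimpleGraph V) [DecidableRel G.Adj] (S : Finset V) :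
    cut G S = ∑ v ∈ S, ∑ u ∈ Sᶜ, (if G.Adj v u then 1 else 0) := by
  rw [cut, Finset.card_filter, Finset.sum_product]

lemma growth (G : SimpleGraph V) [DecidableRel G.Adj] (hG : G.Connected) (p : V) (r : ℕ) :
    vol G (ball G p r) + cut G (ball G p r) ≤ vol G (ball G p (r + 1)) := by
  classical
  set S := ball G p r with hS
  set T := ball G p (r + 1) with hT
  have hST : S ⊆ T := ball_mono G p (Nat.le_succ r)
  have hvol : vol G T = vol G S + ∑ v ∈ T \ S, G.degree v := by
    rw [vol, vol, ← Finset.sum_sdiff hST, add_comm]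
  have hcut : cut G S ≤ ∑ v ∈ T \ S, G.degree v := by
    rw [cut_eq_sum, Finset.sum_comm]
    have hzero : ∀ v ∈ Sᶜ, v ∉ T \ S → ∑ u ∈ S, (if G.Adj u v then 1 else 0) = 0 := by
      intro v hv hvT
      refine Finset.sum_eq_zero fun u hu => ?_
      rw [if_neg]
      intro hadj
      apply hvT
      rw [Finset.mem_sdiff]
      refine ⟨?_, Finset.mem_compl.1 hv⟩
      have hdpu : G.dist p u ≤ r := by
        have := (Finset.mem_filter.1 (hS ▸ hu)).2
        exact this
      have htri := hG.dist_triangle (u := p) (v := u) (w := v)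
      have hone : G.dist u v = 1 := SimpleGraph.dist_eq_one_iff_adj.2 hadj
      rw [hT]
      simp only [ball, Finset.mem_filter, Finset.mem_univ, true_and]
      omega
    have hsub : T \ S ⊆ Sᶜ := fun v hv => by
      rw [Finset.mem_compl]
      exact (Finset.mem_sdiff.1 hv).2
    calc ∑ v ∈ Sᶜ, ∑ u ∈ S, (if G.Adj u v then 1 else 0)
        = ∑ v ∈ T \ S, ∑ u ∈ S, (if G.Adj u v then 1 else 0) :=
          (Finset.sum_subset hsub hzero).symm
      _ ≤ ∑ v ∈ T \ S, G.degree v := by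
          refine Finset.sum_le_sum fun v hv => ?_
          calc ∑ u ∈ S, (if G.Adj u v then 1 else 0)
              ≤ ∑ u : V, (if G.Adj u v then 1 else 0) :=
                Finset.sum_le_sum_of_subset (Finset.subset_univ S)
            _ = G.degree v := by
                rw [Finset.sum_boole, Nat.cast_id]
                rw [show (Finset.univ.filter fun u => G.Adj u v) = G.neighborFinset v by
                  rw [SimpleGraph.neighborFinset_eq_filter]
                  ext u
                  simp [SimpleGraph.adj_comm]]
                rfl
  omega

lemma exists_good_radius (G : SimpleGraph V) [DecidableRel G.Adj] (hG : G.Connected)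
    (hd : ∀ v, 0 < G.degree v) (p : V) (R : ℕ) {φ : ℝ} (hφ : 0 ≤ φ)
    (hbig : ((Fintype.card V : ℝ)) ^ 2 ≤ (1 + φ) ^ R) :
    ∃ r < R, (cut G (ball G p r) : ℝ) ≤ φ * (vol G (ball G p r)) := by
  by_contra hcon
  push_neg at hcon
  have hind : ∀ r, r ≤ R → (1 + φ) ^ r ≤ (vol G (ball G p r) : ℝ) := by
    intro r
    induction r with
    | zero =>
      intro _
      simpa using (show (1:ℝ) ≤ (vol G (ball G p 0) : ℝ) by
        exact_mod_cast one_le_vol_ball G hd p 0)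
    | succ r ih =>
      intro h
      have h1 := ih (by omega)
      have h2 := hcon r (by omega)
      have h3 : (vol G (ball G p r) : ℝ) + (cut G (ball G p r) : ℝ) ≤
          (vol G (ball G p (r + 1)) : ℝ) := by
        exact_mod_cast growth G hG p r
      calc (1 + φ) ^ (r + 1) = (1 + φ) ^ r * (1 + φ) := pow_succ _ _
        _ ≤ (vol G (ball G p r) : ℝ) * (1 + φ) :=
            mul_le_mul_of_nonneg_right h1 (by linarith)
        _ = (vol G (ball G p r) : ℝ) + φ * (vol G (ball G p r) : ℝ) := by ring
        _ ≤ (vol G (ball G p (r + 1)) : ℝ) := by linarith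
  have hR := hind R le_rfl
  have hn1 : 1 ≤ Fintype.card V := Fintype.card_pos_iff.2 ⟨p⟩
  have hvol : (vol G (ball G p R) : ℝ) ≤
      (Fintype.card V : ℝ) * ((Fintype.card V : ℝ) - 1) := by
    have := vol_le_card G (ball G p R)
    have h2 : ((Fintype.card V * (Fintype.card V - 1) : ℕ) : ℝ) =
        (Fintype.card V : ℝ) * ((Fintype.card V : ℝ) - 1) := by
      push_cast [Nat.cast_sub hn1]
      ring
    calc (vol G (ball G p R) : ℝ) ≤ ((Fintype.card V * (Fintype.card V - 1) : ℕ) : ℝ) := by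
          exact_mod_cast this
      _ = _ := h2
  have hn1' : (1:ℝ) ≤ (Fintype.card V : ℝ) := by exact_mod_cast hn1
  nlinarith [hbig, hR, hvol]

lemma indicator_sum_sq {k : ℕ} (S : Fin k → Finset V)
    (hdisj : ∀ i j, i ≠ j → Disjoint (S i) (S j)) (c : Fin k → ℝ) (v : V) :
    (∑ i, c i * (if v ∈ S i then (1:ℝ) else 0)) ^ 2 =
      ∑ i, (c i) ^ 2 * (if v ∈ S i then (1:ℝ) else 0) := by
  classical
  by_cases hv : ∃ i, v ∈ S i
  · obtain ⟨i0, hi0⟩ := hv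
    have huniq : ∀ j, j ≠ i0 → (if v ∈ S j then (1:ℝ) else 0) = 0 := by
      intro j hj
      rw [if_neg]
      exact fun hmem => Finset.disjoint_left.1 (hdisj j i0 hj) hmem hi0
    rw [Finset.sum_eq_single i0 (fun j _ hj => by rw [huniq j hj, mul_zero])
      (fun h => absurd (Finset.mem_univ i0) h),
      Finset.sum_eq_single i0 (fun j _ hj => by rw [huniq j hj, mul_zero])
      (fun h => absurd (Finset.mem_univ i0) h), if_pos hi0]
    ring
  · push_neg at hv
    have : ∀ i : Fin k, (if v ∈ S i then (1:ℝ) else 0) = 0 := fun i => if_neg (hv i)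
    simp only [this, mul_zero, Finset.sum_const_zero]
    norm_num

lemma norm_decomp (G : SimpleGraph V) [DecidableRel G.Adj] {k : ℕ} (S : Fin k → Finset V)
    (hdisj : ∀ i j, i ≠ j → Disjoint (S i) (S j)) (c : Fin k → ℝ) :
    ∑ v, (∑ i, c i * (if v ∈ S i then (1:ℝ) else 0)) ^ 2 * (G.degree v : ℝ) =
      ∑ i, (c i) ^ 2 * (vol G (S i) : ℝ) := by
  classical
  have h1 : ∀ v, (∑ i, c i * (if v ∈ S i then (1:ℝ) else 0)) ^ 2 * (G.degree v : ℝ) =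
      ∑ i, (c i) ^ 2 * ((if v ∈ S i then (1:ℝ) else 0) * (G.degree v : ℝ)) := by
    intro v
    rw [indicator_sum_sq S hdisj c v, Finset.sum_mul]
    exact Finset.sum_congr rfl fun i _ => by ring
  simp only [h1]
  rw [Finset.sum_comm]
  refine Finset.sum_congr rfl fun i _ => ?_
  rw [← Finset.mul_sum]
  congr 1
  have : ∀ v : V, (if v ∈ S i then (1:ℝ) else 0) * (G.degree v : ℝ) =
      (if v ∈ S i then (G.degree v : ℝ) else 0) := fun v => by
    by_cases h : v ∈ S i <;> simp [h]
  simp only [this]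
  rw [Finset.sum_ite_mem, Finset.univ_inter, vol]
  push_cast
  rfl

lemma key_bound (G : SimpleGraph V) [DecidableRel G.Adj] {k : ℕ} (S : Fin k → Finset V)
    (hdisj : ∀ i j, i ≠ j → Disjoint (S i) (S j)) (c : Fin k → ℝ) :
    (1/2) * ∑ v, ∑ u, (if G.Adj v u then (1:ℝ) else 0) *
        ((∑ i, c i * (if v ∈ S i then (1:ℝ) else 0)) -
         (∑ i, c i * (if u ∈ S i then (1:ℝ) else 0))) ^ 2 ≤
      2 * ∑ i, (c i) ^ 2 * (cut G (S i) : ℝ) := by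
  classical
  set a : V → V → ℝ := fun v u => if G.Adj v u then (1:ℝ) else 0 with ha
  set b : Fin k → V → V → ℝ :=
    fun i v u => if v ∈ S i ∧ u ∉ S i then (1:ℝ) else 0 with hb
  set g : V → ℝ := fun v => ∑ i, c i * (if v ∈ S i then (1:ℝ) else 0) with hg
  have hg_mem : ∀ {v : V} {i : Fin k}, v ∈ S i → g v = c i := by
    intro v i hi
    rw [hg]
    simp only
    rw [Finset.sum_eq_single i (fun j _ hj => by
      rw [if_neg fun hmem => Finset.disjoint_left.1 (hdisj j i hj) hmem hi, mul_zero])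
      (fun h => absurd (Finset.mem_univ i) h), if_pos hi, mul_one]
  have hg_none : ∀ {v : V}, (∀ i, v ∉ S i) → g v = 0 := by
    intro v hv
    rw [hg]
    exact Finset.sum_eq_zero fun i _ => by rw [if_neg (hv i), mul_zero]
  have hterm : ∀ v u : V, a v u * (g v - g u) ^ 2 ≤
      2 * ∑ i, (c i) ^ 2 * (a v u * b i v u + a v u * b i u v) := by
    intro v u
    have hnn : ∀ i ∈ Finset.univ (α := Fin k),
        (0:ℝ) ≤ (c i) ^ 2 * (a v u * b i v u + a v u * b i u v) := by
      intro i _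
      have h1 : (0:ℝ) ≤ a v u := by rw [ha]; dsimp only; positivity
      have h2 : (0:ℝ) ≤ b i v u := by rw [hb]; dsimp only; positivity
      have h3 : (0:ℝ) ≤ b i u v := by rw [hb]; dsimp only; positivity
      positivity
    have hsumnn : (0:ℝ) ≤ ∑ i, (c i) ^ 2 * (a v u * b i v u + a v u * b i u v) :=
      Finset.sum_nonneg hnn
    by_cases hadj : G.Adj v u
    · have hA : a v u = 1 := if_pos hadj
      by_cases hv : ∃ i, v ∈ S i
      · obtain ⟨i0, hi0⟩ := hv
        by_cases hu : ∃ j, u ∈ S j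
        · obtain ⟨j0, hj0⟩ := hu
          by_cases hij : i0 = j0
          · calc a v u * (g v - g u) ^ 2 = a v u * 0 ^ 2 := by
                  rw [hg_mem hi0, hij, hg_mem hj0, sub_self]
              _ = 0 := by ring
              _ ≤ 2 * ∑ i, (c i) ^ 2 * (a v u * b i v u + a v u * b i u v) := by linarith [hsumnn]
          · have husub : u ∉ S i0 := fun hmem =>
              Finset.disjoint_left.1 (hdisj i0 j0 hij) hmem hj0
            have hvsub : v ∉ S j0 := fun hmem =>
              Finset.disjoint_left.1 (hdisj j0 i0 (Ne.symm hij)) hmem hi0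
            have hbi0 : b i0 v u = 1 := if_pos ⟨hi0, husub⟩
            have hbj0 : b j0 u v = 1 := if_pos ⟨hj0, hvsub⟩
            have hpair : (c i0) ^ 2 + (c j0) ^ 2 ≤
                ∑ i, (c i) ^ 2 * (a v u * b i v u + a v u * b i u v) := by
              have hsubset : ({i0, j0} : Finset (Fin k)) ⊆ Finset.univ :=
                Finset.subset_univ _
              have hps := Finset.sum_le_sum_of_subset_of_nonneg hsubset
                (fun i _ _ => hnn i (Finset.mem_univ i))
              rw [Finset.sum_pair hij] at hps
              refine le_trans ?_ hps
              have hb1 : (0:ℝ) ≤ b i0 u v := by rw [hb]; dsimp only; positivity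
              have hb2 : (0:ℝ) ≤ b j0 v u := by rw [hb]; dsimp only; positivity
              rw [hA, hbi0, hbj0]
              nlinarith [sq_nonneg (c i0), sq_nonneg (c j0)]
            calc a v u * (g v - g u) ^ 2 = (c i0 - c j0) ^ 2 := by
                  rw [hg_mem hi0, hg_mem hj0, hA]; ring
              _ ≤ 2 * ((c i0) ^ 2 + (c j0) ^ 2) := by nlinarith [sq_nonneg (c i0 + c j0)]
              _ ≤ 2 * ∑ i, (c i) ^ 2 * (a v u * b i v u + a v u * b i u v) := by linarith [hpair]
        · push_neg at hu
          have hbi0 : b i0 v u = 1 := if_pos ⟨hi0, hu i0⟩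
          have hsingle : (c i0) ^ 2 ≤
              ∑ i, (c i) ^ 2 * (a v u * b i v u + a v u * b i u v) := by
            have := Finset.single_le_sum hnn (Finset.mem_univ i0)
            refine le_trans ?_ this
            have hb1 : (0:ℝ) ≤ b i0 u v := by rw [hb]; dsimp only; positivity
            rw [hA, hbi0]
            nlinarith [sq_nonneg (c i0)]
          calc a v u * (g v - g u) ^ 2 = (c i0) ^ 2 := by
                rw [hg_mem hi0, hg_none hu, hA]; ring
            _ ≤ 2 * ∑ i, (c i) ^ 2 * (a v u * b i v u + a v u * b i u v) := by linarith [hsingle, sq_nonneg (c i0)]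
      · push_neg at hv
        by_cases hu : ∃ j, u ∈ S j
        · obtain ⟨j0, hj0⟩ := hu
          have hbj0 : b j0 u v = 1 := if_pos ⟨hj0, hv j0⟩
          have hsingle : (c j0) ^ 2 ≤
              ∑ i, (c i) ^ 2 * (a v u * b i v u + a v u * b i u v) := by
            have := Finset.single_le_sum hnn (Finset.mem_univ j0)
            refine le_trans ?_ this
            have hb1 : (0:ℝ) ≤ b j0 v u := by rw [hb]; dsimp only; positivity
            rw [hA, hbj0]
            nlinarith [sq_nonneg (c j0)]
          calc a v u * (g v - g u) ^ 2 = (c j0) ^ 2 := by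
                rw [hg_none hv, hg_mem hj0, hA]; ring
            _ ≤ 2 * ∑ i, (c i) ^ 2 * (a v u * b i v u + a v u * b i u v) := by linarith [hsingle, sq_nonneg (c j0)]
        · push_neg at hu
          calc a v u * (g v - g u) ^ 2 = a v u * 0 ^ 2 := by
                rw [hg_none hv, hg_none hu, sub_self]
            _ = 0 := by ring
            _ ≤ 2 * ∑ i, (c i) ^ 2 * (a v u * b i v u + a v u * b i u v) := by linarith [hsumnn]
    · have hA : a v u = 0 := if_neg hadj
      calc a v u * (g v - g u) ^ 2 = 0 := by rw [hA]; ring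
        _ ≤ 2 * ∑ i, (c i) ^ 2 * (a v u * b i v u + a v u * b i u v) := by linarith [hsumnn]
  have hcut1 : ∀ i, ∑ v, ∑ u, a v u * b i v u = (cut G (S i) : ℝ) := by
    intro i
    rw [cut_eq_sum]
    push_cast
    have hpt : ∀ v u : V, a v u * b i v u =
        if v ∈ S i then (if u ∈ (S i)ᶜ then (if G.Adj v u then (1:ℝ) else 0) else 0) else 0 := by
      intro v u
      rw [ha, hb]
      dsimp only
      by_cases h1 : v ∈ S i <;> by_cases h2 : u ∈ S i <;>
        simp [h1, h2] <;> by_cases h3 : G.Adj v u <;> simp [h3]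
    simp only [hpt]
    calc ∑ v : V, ∑ u : V,
          (if v ∈ S i then (if u ∈ (S i)ᶜ then (if G.Adj v u then (1:ℝ) else 0) else 0) else 0)
        = ∑ v : V, (if v ∈ S i then
            ∑ u : V, (if u ∈ (S i)ᶜ then (if G.Adj v u then (1:ℝ) else 0) else 0) else 0) := by
          refine Finset.sum_congr rfl fun v _ => ?_
          by_cases h : v ∈ S i
          · simp only [if_pos h]
          · simp only [if_neg h, Finset.sum_const_zero]
      _ = ∑ v ∈ S i, ∑ u : V, (if u ∈ (S i)ᶜ then (if G.Adj v u then (1:ℝ) else 0) else 0) := by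
          rw [Finset.sum_ite_mem, Finset.univ_inter]
      _ = ∑ v ∈ S i, ∑ u ∈ (S i)ᶜ, (if G.Adj v u then (1:ℝ) else 0) := by
          refine Finset.sum_congr rfl fun v _ => ?_
          rw [Finset.sum_ite_mem, Finset.univ_inter]
  have hcut2 : ∀ i, ∑ v, ∑ u, a v u * b i u v = (cut G (S i) : ℝ) := by
    intro i
    rw [← hcut1 i, Finset.sum_comm]
    refine Finset.sum_congr rfl fun v _ => Finset.sum_congr rfl fun u _ => ?_
    congr 1
    rw [ha]
    dsimp only
    by_cases h : G.Adj v u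
    · rw [if_pos h, if_pos h.symm]
    · rw [if_neg h, if_neg fun hh => h hh.symm]
  calc (1/2) * ∑ v, ∑ u, a v u * (g v - g u) ^ 2
      ≤ (1/2) * ∑ v, ∑ u, 2 * ∑ i, (c i) ^ 2 * (a v u * b i v u + a v u * b i u v) := by
        refine mul_le_mul_of_nonneg_left (Finset.sum_le_sum fun v _ =>
          Finset.sum_le_sum fun u _ => hterm v u) (by norm_num)
    _ = ∑ v, ∑ u, ∑ i, (c i) ^ 2 * (a v u * b i v u + a v u * b i u v) := by
        rw [Finset.mul_sum]
        refine Finset.sum_congr rfl fun v _ => ?_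
        rw [Finset.mul_sum]
        refine Finset.sum_congr rfl fun u _ => ?_
        ring
    _ = ∑ i, ∑ v, ∑ u, (c i) ^ 2 * (a v u * b i v u + a v u * b i u v) :=
        (Finset.sum_congr rfl fun v _ => Finset.sum_comm).trans Finset.sum_comm
    _ = ∑ i, (c i) ^ 2 * ((∑ v, ∑ u, a v u * b i v u) + (∑ v, ∑ u, a v u * b i u v)) := by
        refine Finset.sum_congr rfl fun i _ => ?_
        simp only [mul_add, Finset.mul_sum, Finset.sum_add_distrib]
    _ = ∑ i, (c i) ^ 2 * (2 * (cut G (S i) : ℝ)) := by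
        refine Finset.sum_congr rfl fun i _ => ?_
        rw [hcut1 i, hcut2 i]
        ring
    _ = 2 * ∑ i, (c i) ^ 2 * (cut G (S i) : ℝ) := by
        rw [Finset.mul_sum]
        exact Finset.sum_congr rfl fun i _ => by ring

lemma sorted_apply_le {N : ℕ} (f : Fin N → ℝ) (ρ : ℝ) (k : ℕ) (hk : k - 1 < N)
    (h : k - 1 < Fintype.card {i : Fin N // f i ≤ ρ}) :
    (f ∘ Tuple.sort f) ⟨k - 1, hk⟩ ≤ ρ := by
  classical
  refine (Tuple.lt_card_le_iff_apply_le_of_monotone (f := f ∘ Tuple.sort f) (a := ρ)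
    (Tuple.monotone_sort f) (j := ⟨k - 1, hk⟩)).1 ?_
  rw [← Fintype.card_subtype]
  have hcard : Fintype.card {i : Fin N // (f ∘ Tuple.sort f) i ≤ ρ} =
      Fintype.card {i : Fin N // f i ≤ ρ} :=
    Fintype.card_congr (Equiv.subtypeEquiv (Tuple.sort f) fun i => Iff.rfl)
  rw [hcard]
  exact h

lemma normLapEigenvalue_le_of_card (G : SimpleGraph V) [DecidableRel G.Adj] {ρ : ℝ} {k : ℕ}
    (hk : k - 1 < Fintype.card V)
    (h : k ≤ Fintype.card {v : V // (normLap_isHermitian G).eigenvalues v ≤ ρ})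
    (hk1 : 1 ≤ k) :
    normLapEigenvalue G k hk ≤ ρ := by
  classical
  show ((fun f => (f ∘ Tuple.sort f) ⟨k - 1, hk⟩ : (Fin (Fintype.card V) → ℝ) → ℝ)
    ((normLap_isHermitian G).eigenvalues ∘ (Fintype.equivFin V).symm)) ≤ ρ
  apply sorted_apply_le _ ρ k hk
  have : Fintype.card {i : Fin (Fintype.card V) //
      ((normLap_isHermitian G).eigenvalues ∘ (Fintype.equivFin V).symm) i ≤ ρ} =
      Fintype.card {v : V // (normLap_isHermitian G).eigenvalues v ≤ ρ} := by
    refine Fintype.card_congr (Equiv.subtypeEquiv (Fintype.equivFin V).symm fun i => Iff.rfl)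
  omega

end Aux

section Aux2

set_option linter.unusedSectionVars false

lemma deg_pos (G : SimpleGraph V) [DecidableRel G.Adj] (hG : G.Connected)
    (hn : 2 ≤ Fintype.card V) (v : V) : 0 < G.degree v := by
  rw [SimpleGraph.degree_pos_iff_exists_adj]
  obtain ⟨u, hu⟩ := Fintype.exists_ne_of_one_lt_card (by omega) v
  obtain ⟨w⟩ := hG.preconnected v u
  cases w with
  | nil => exact absurd rfl hu.symm
  | cons h p => exact ⟨_, h⟩

lemma normLap_quad_le (G : SimpleGraph V) [DecidableRel G.Adj]
    (hd : ∀ v, 0 < G.degree v) (y : V → ℝ) :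
    dotProduct y ((normLap G).mulVec y) ≤ 2 * dotProduct y y := by
  classical
  set g : V → ℝ := fun v => y v / Real.sqrt (G.degree v) with hgdef
  have hs : ∀ v, Real.sqrt (G.degree v) ≠ 0 := fun v =>
    Real.sqrt_ne_zero'.2 (by exact_mod_cast hd v)
  have hy : (fun v => g v * Real.sqrt (G.degree v)) = y := by
    funext v
    rw [hgdef]
    exact div_mul_cancel₀ _ (hs v)
  have h1 := normLap_quadform G hd g
  rw [hy] at h1
  have h2 := quad_identity G g
  have h3 := quad_le_two G g
  have h4 : ∑ v, g v ^ 2 * (G.degree v : ℝ) = dotProduct y y := by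
    simp only [dotProduct]
    refine Finset.sum_congr rfl fun v _ => ?_
    rw [hgdef]
    dsimp only
    rw [div_pow, Real.sq_sqrt (by positivity),
      div_mul_cancel₀ _ (Nat.cast_ne_zero.2 (hd v).ne')]
    ring
  rw [h1, h2]
  rw [h4] at h3
  exact h3

lemma eigen_le_two (G : SimpleGraph V) [DecidableRel G.Adj]
    (hd : ∀ v, 0 < G.degree v) (v0 : V) :
    (normLap_isHermitian G).eigenvalues v0 ≤ 2 := by
  classical
  set hA := normLap_isHermitian G
  set b : V → ℝ := ⇑(hA.eigenvectorBasis v0) with hb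
  have hmul : (normLap G).mulVec b = hA.eigenvalues v0 • b := hA.mulVec_eigenvectorBasis v0
  have hnorm : dotProduct b b = 1 := by
    have h1 : (inner ℝ (hA.eigenvectorBasis v0) (hA.eigenvectorBasis v0) : ℝ) = 1 := by
      rw [real_inner_self_eq_norm_sq, hA.eigenvectorBasis.orthonormal.1 v0, one_pow]
    rw [← h1]
    simp only [PiLp.inner_apply, RCLike.inner_apply, conj_trivial]
    rfl
  have hQ : dotProduct b ((normLap G).mulVec b) = hA.eigenvalues v0 := by
    rw [hmul, dotProduct_smul, smul_eq_mul, hnorm, mul_one]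
  have := normLap_quad_le G hd b
  rw [hQ, hnorm] at this
  linarith

end Aux2

set_option maxHeartbeats 2000000 in
/-- **Main theorem (Oveis Gharan–Trevisan).** For any unweighted, connected simple graph `G`
on `n ≥ 2` vertices and any `2 ≤ k ≤ n`, one has `λ_k ⬝ diam(G) ≤ 48 k log n`. -/
theorem diam_bound_of_laplacian_eigenvalue (G : SimpleGraph V) [DecidableRel G.Adj]
    (hG : G.Connected) (hn : 2 ≤ Fintype.card V)
    (k : ℕ) (hk2 : 2 ≤ k) (hkn : k ≤ Fintype.card V) :
    normLapEigenvalue G k (by omega) * G.diam ≤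
      48 * k * Real.log (Fintype.card V) := by
  classical
  have hd : ∀ v, 0 < G.degree v := deg_pos G hG hn
  set n := Fintype.card V with hndef
  haveI : Nonempty V := Fintype.card_pos_iff.1 (by omega)
  have hlog2 : (0.6931471803 : ℝ) < Real.log 2 := Real.log_two_gt_d9
  have hlogn2 : Real.log 2 ≤ Real.log n := by
    apply Real.log_le_log (by norm_num)
    exact_mod_cast hn
  have hlogn0 : (0:ℝ) ≤ Real.log n := by linarith
  have htriv : normLapEigenvalue G k (by omega) ≤ 2 := by
    apply normLapEigenvalue_le_of_card G (by omega) ?_ (by omega)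
    have hall : ∀ v : V, (normLap_isHermitian G).eigenvalues v ≤ 2 := eigen_le_two G hd
    have hcard : n ≤ Fintype.card {v : V // (normLap_isHermitian G).eigenvalues v ≤ 2} := by
      rw [hndef]
      exact Fintype.card_le_of_injective (fun v => ⟨v, hall v⟩)
        (fun a b hab => congrArg Subtype.val hab)
    omega
  set D := G.diam with hDdef
  have hD0 : (0:ℝ) ≤ (D:ℝ) := Nat.cast_nonneg _
  by_cases hDsmall : D < 4 * k
  · have h1 : normLapEigenvalue G k (by omega) * (D:ℝ) ≤ 2 * (D:ℝ) :=
      mul_le_mul_of_nonneg_right htriv hD0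
    have h2 : (D:ℝ) ≤ 4 * k := by exact_mod_cast hDsmall.le
    have hkR : (2:ℝ) ≤ (k:ℝ) := by exact_mod_cast hk2
    nlinarith
  · push_neg at hDsmall
    set R := D / (2 * k) with hRdef
    have hkpos : 0 < 2 * k := by omega
    have h2kR : 2 * k * R ≤ D := by
      rw [hRdef, mul_comm]
      exact Nat.div_mul_le_self D (2 * k)
    have hR1 : 1 ≤ R := by
      rw [hRdef, Nat.le_div_iff_mul_le hkpos]
      omega
    have hRpos : (0:ℝ) < (R:ℝ) := by exact_mod_cast hR1
    have hD4 : D ≤ 4 * k * R := by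
      have hmod := Nat.div_add_mod D (2 * k)
      have hmlt : D % (2 * k) < 2 * k := Nat.mod_lt _ hkpos
      have h2k2kR : 2 * k ≤ 2 * k * R := Nat.le_mul_of_pos_right _ hR1
      calc D = 2 * k * (D / (2 * k)) + D % (2 * k) := hmod.symm
        _ = 2 * k * R + D % (2 * k) := by rw [hRdef]
        _ ≤ 2 * k * R + 2 * k := by omega
        _ ≤ 2 * k * R + 2 * k * R := by omega
        _ = 4 * k * R := by ring
    set φ : ℝ := 3 * Real.log n / (R:ℝ) with hφdef
    have hφ0 : 0 ≤ φ := by positivity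
    have hmain : normLapEigenvalue G k (by omega) ≤ 2 * φ := by
      rcases le_or_gt φ 1 with hφ1 | hφ1
      swap
      · linarith
      have hn0r : (0:ℝ) < (n:ℝ) := by positivity
      have hbig : ((n:ℝ)) ^ 2 ≤ (1 + φ) ^ R := by
        have hexp : Real.exp (φ * Real.log 2) ≤ 1 + φ := by
          have hcvx := convexOn_exp.2 (Set.mem_univ (0:ℝ)) (Set.mem_univ (Real.log 2))
            (by linarith : (0:ℝ) ≤ 1 - φ) hφ0 (by ring)
          simp only [smul_eq_mul, mul_zero, zero_add, Real.exp_zero,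
            Real.exp_log two_pos] at hcvx
          linarith
        have hφR : (R:ℝ) * φ = 3 * Real.log n := by
          rw [hφdef]
          field_simp
        calc ((n:ℝ)) ^ 2 = Real.exp (2 * Real.log n) := by
              rw [two_mul, Real.exp_add, Real.exp_log hn0r]
              ring
          _ ≤ Real.exp ((R:ℝ) * (φ * Real.log 2)) := by
              apply Real.exp_le_exp.2
              rw [← mul_assoc, hφR]
              nlinarith [hlog2, hlogn0]
          _ = Real.exp (φ * Real.log 2) ^ R := by
              rw [Real.exp_nat_mul]
          _ ≤ (1 + φ) ^ R := pow_le_pow_left₀ (Real.exp_nonneg _) hexp R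
      obtain ⟨uu, vv, huv⟩ := SimpleGraph.exists_dist_eq_diam (G := G)
      obtain ⟨w, hw⟩ := hG.exists_walk_length_eq_dist uu vv
      set p : Fin k → V := fun i => w.getVert (2 * R * i.val) with hpdef
      choose r hrR hrgood using fun i : Fin k =>
        exists_good_radius G hG hd (p i) R hφ0 hbig
      set S : Fin k → Finset V := fun i => ball G (p i) (r i) with hSdef
      have hdistp : ∀ i j : Fin k, i.val < j.val → 2 * R ≤ G.dist (p i) (p j) := by
        intro i j hij
        have hjlen : 2 * R * j.val ≤ w.length := by
          rw [hw, huv]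
          calc 2 * R * j.val ≤ 2 * R * k := Nat.mul_le_mul_left _ (le_of_lt j.2)
            _ = 2 * k * R := by ring
            _ ≤ D := h2kR
        have hge := dist_getVert_ge G hG w hw
          (Nat.mul_le_mul_left (2 * R) hij.le) hjlen
        have hstep : 2 * R * (i.val + 1) ≤ 2 * R * j.val := Nat.mul_le_mul_left _ hij
        have hexpand : 2 * R * i.val + 2 * R = 2 * R * (i.val + 1) := by ring
        have hpi : p i = w.getVert (2 * R * i.val) := rfl
        have hpj : p j = w.getVert (2 * R * j.val) := rfl
        rw [← hpi, ← hpj] at hge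
        omega
      have hdisj : ∀ i j : Fin k, i ≠ j → Disjoint (S i) (S j) := by
        have key : ∀ i j : Fin k, i.val < j.val → Disjoint (S i) (S j) := by
          intro i j hij
          rw [Finset.disjoint_left]
          intro a ha1 ha2
          have h1 : G.dist (p i) a ≤ r i := by
            have := Finset.mem_filter.1 ha1
            exact this.2
          have h2 : G.dist (p j) a ≤ r j := by
            have := Finset.mem_filter.1 ha2
            exact this.2
          have htri := hG.dist_triangle (u := p i) (v := a) (w := p j)
          have hcomm : G.dist a (p j) = G.dist (p j) a := SimpleGraph.dist_comm
          have hdd := hdistp i j hij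
          have hri := hrR i
          have hrj := hrR j
          omega
        intro i j hij
        rcases lt_trichotomy i.val j.val with h | h | h
        · exact key i j h
        · exact absurd (Fin.ext h) hij
        · exact (key j i h).symm
      set x : Fin k → V → ℝ :=
        fun i v => (if v ∈ S i then (1:ℝ) else 0) * Real.sqrt (G.degree v) with hxdef
      have hs0 : ∀ v, Real.sqrt (G.degree v) ≠ 0 := fun v =>
        Real.sqrt_ne_zero'.2 (by exact_mod_cast hd v)
      have hpmem : ∀ i, p i ∈ S i := fun i => mem_ball_self G (p i) (r i)
      have hlin : LinearIndependent ℝ x := by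
        rw [Fintype.linearIndependent_iff]
        intro c hc i
        have hci := congrFun hc (p i)
        simp only [Finset.sum_apply, Pi.smul_apply, smul_eq_mul, Pi.zero_apply, hxdef] at hci
        rw [Finset.sum_eq_single i (fun j _ hji => by
            rw [if_neg (fun hmem => Finset.disjoint_left.1 (hdisj j i hji) hmem (hpmem i))]
            ring)
          (fun h => absurd (Finset.mem_univ i) h)] at hci
        rw [if_pos (hpmem i), one_mul] at hci
        rcases mul_eq_zero.1 hci with h | h
        · exact h
        · exact absurd h (hs0 (p i))
      have hQ : ∀ c : Fin k → ℝ,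
          dotProduct (∑ i, c i • x i) ((normLap G).mulVec (∑ i, c i • x i)) ≤
            (2 * φ) * dotProduct (∑ i, c i • x i) (∑ i, c i • x i) := by
        intro c
        have hyg : (∑ i, c i • x i) = fun v =>
            (∑ i, c i * (if v ∈ S i then (1:ℝ) else 0)) * Real.sqrt (G.degree v) := by
          funext v
          simp only [Finset.sum_apply, Pi.smul_apply, smul_eq_mul, hxdef]
          rw [Finset.sum_mul]
          exact Finset.sum_congr rfl fun i _ => by ring
        rw [hyg]
        rw [normLap_quadform G hd (fun v => ∑ i, c i * (if v ∈ S i then (1:ℝ) else 0)),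
          quad_identity G (fun v => ∑ i, c i * (if v ∈ S i then (1:ℝ) else 0))]
        have hdot : dotProduct
            (fun v => (∑ i, c i * (if v ∈ S i then (1:ℝ) else 0)) * Real.sqrt (G.degree v))
            (fun v => (∑ i, c i * (if v ∈ S i then (1:ℝ) else 0)) * Real.sqrt (G.degree v)) =
            ∑ v, (∑ i, c i * (if v ∈ S i then (1:ℝ) else 0)) ^ 2 * (G.degree v : ℝ) := by
          simp only [dotProduct]
          refine Finset.sum_congr rfl fun v _ => ?_
          have hss : Real.sqrt (G.degree v) * Real.sqrt (G.degree v) = (G.degree v : ℝ) :=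
            Real.mul_self_sqrt (by positivity)
          nlinarith [hss]
        rw [hdot]
        calc (1/2) * ∑ v, ∑ u, (if G.Adj v u then (1:ℝ) else 0) *
              ((∑ i, c i * (if v ∈ S i then (1:ℝ) else 0)) -
               (∑ i, c i * (if u ∈ S i then (1:ℝ) else 0))) ^ 2
            ≤ 2 * ∑ i, (c i) ^ 2 * (cut G (S i) : ℝ) := key_bound G S hdisj c
          _ ≤ 2 * ∑ i, (c i) ^ 2 * (φ * (vol G (S i) : ℝ)) := by
              refine mul_le_mul_of_nonneg_left (Finset.sum_le_sum fun i _ => ?_) (by norm_num)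
              exact mul_le_mul_of_nonneg_left (hrgood i) (sq_nonneg _)
          _ = (2 * φ) * ∑ i, (c i) ^ 2 * (vol G (S i) : ℝ) := by
              rw [Finset.mul_sum, Finset.mul_sum]
              exact Finset.sum_congr rfl fun i _ => by ring
          _ = (2 * φ) * ∑ v, (∑ i, c i * (if v ∈ S i then (1:ℝ) else 0)) ^ 2 *
                (G.degree v : ℝ) := by
              rw [norm_decomp G S hdisj c]
      have hcount := le_card_eigenvalue_le (normLap_isHermitian G) x hlin hQ
      exact normLapEigenvalue_le_of_card G (by omega) hcount (by omega)
    have hD4R : ((D:ℕ):ℝ) ≤ 4 * (k:ℝ) * (R:ℝ) := by exact_mod_cast hD4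
    have hφD : (2 * φ) * (D:ℝ) ≤ 24 * (k:ℝ) * Real.log n := by
      have hrearr : (2 * φ) * (D:ℝ) = 6 * Real.log n * (D:ℝ) / (R:ℝ) := by
        rw [hφdef]
        ring
      rw [hrearr, div_le_iff₀ hRpos]
      nlinarith [mul_nonneg hlogn0 (sub_nonneg.2 hD4R)]
    calc normLapEigenvalue G k (by omega) * (D:ℝ)
        ≤ (2 * φ) * (D:ℝ) := mul_le_mul_of_nonneg_right hmain hD0
      _ ≤ 24 * (k:ℝ) * Real.log n := hφD
      _ ≤ 48 * (k:ℝ) * Real.log n := by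
          have hk0 : (0:ℝ) ≤ (k:ℝ) := Nat.cast_nonneg _
          nlinarith
end

section
/- Let G be an unweighted, connected simple graph on n ≥ 2 vertices, let v be a vertex, and let r > 0 be an integer such that vol(B(v,r)) ≤ vol(V)/2. Then there exists an integer i with 0 ≤ i < r such that φ(B(v,i)) ≤ 4 · log n / r, where log denotes the natural logarithm. -/
set_option linter.unusedSectionVars false


open Finset Real

variable {V : Type*} [Fintype V] [DecidableEq V]

section MyAux

variable (G : SimpleGraph V) [DecidableRel G.Adj]

lemma myMem_ball_iff {v u : V} {i : ℕ} : u ∈ ball G v i ↔ G.dist v u ≤ i := by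
  simp [ball]

lemma myBall_mono (v : V) {i j : ℕ} (h : i ≤ j) : ball G v i ⊆ ball G v j := by
  intro u hu
  rw [myMem_ball_iff] at hu ⊢
  omega

lemma myVol_mono {S T : Finset V} (h : S ⊆ T) : vol G S ≤ vol G T :=
  Finset.sum_le_sum_of_subset h

lemma myVol_add_compl (S : Finset V) : vol G S + vol G Sᶜ = vol G Finset.univ :=
  Finset.sum_add_sum_compl S _

lemma myCut_le_of_snd_mem (S T : Finset V)
    (h : ∀ p ∈ (S ×ˢ Sᶜ).filter fun p => G.Adj p.1 p.2, p.2 ∈ T) :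
    cut G S ≤ vol G T := by
  unfold cut vol
  rw [Finset.card_eq_sum_card_fiberwise h]
  refine Finset.sum_le_sum fun w _ => ?_
  rw [← SimpleGraph.card_neighborFinset_eq_degree]
  apply Finset.card_le_card_of_injOn (fun p => p.1)
  · intro p hp
    simp only [Finset.mem_coe, Finset.mem_filter, Finset.mem_product] at hp ⊢
    rw [SimpleGraph.mem_neighborFinset, ← hp.2]
    exact hp.1.2.symm
  · intro p hp q hq hpq
    simp only [Finset.coe_filter, Set.mem_setOf_eq] at hp hq
    exact Prod.ext hpq (hp.2.trans hq.2.symm)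

lemma myCut_le_vol (S : Finset V) : cut G S ≤ vol G S := by
  unfold cut vol
  rw [Finset.card_eq_sum_card_fiberwise
    (f := fun p : V × V => p.1) (t := S)
    (fun p hp => (Finset.mem_product.mp (Finset.mem_filter.mp hp).1).1)]
  refine Finset.sum_le_sum fun u _ => ?_
  rw [← SimpleGraph.card_neighborFinset_eq_degree]
  apply Finset.card_le_card_of_injOn (fun p => p.2)
  · intro p hp
    simp only [Finset.mem_coe, Finset.mem_filter, Finset.mem_product] at hp ⊢
    rw [SimpleGraph.mem_neighborFinset]
    exact hp.2 ▸ hp.1.2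
  · intro p hp q hq hpq
    simp only [Finset.coe_filter, Set.mem_setOf_eq] at hp hq
    exact Prod.ext (hp.2.trans hq.2.symm) hpq

lemma myCut_le_vol_compl (S : Finset V) : cut G S ≤ vol G Sᶜ :=
  myCut_le_of_snd_mem G S Sᶜ fun p hp =>
    (Finset.mem_product.mp (Finset.mem_filter.mp hp).1).2

lemma myGrowth (hG : G.Connected) (v : V) (i : ℕ) :
    vol G (ball G v i) + cut G (ball G v i) ≤ vol G (ball G v (i + 1)) := by
  have hsub : ball G v i ⊆ ball G v (i + 1) := myBall_mono G v (Nat.le_succ i)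
  have hcut : cut G (ball G v i) ≤ vol G (ball G v (i + 1) \ ball G v i) := by
    apply myCut_le_of_snd_mem
    intro p hp
    simp only [Finset.mem_filter, Finset.mem_product, Finset.mem_compl] at hp
    obtain ⟨⟨h1, h2⟩, h3⟩ := hp
    rw [myMem_ball_iff] at h1
    rw [Finset.mem_sdiff]
    refine ⟨?_, h2⟩
    rw [myMem_ball_iff]
    calc G.dist v p.2 ≤ G.dist v p.1 + G.dist p.1 p.2 := hG.dist_triangle
      _ ≤ i + 1 := by
          rw [SimpleGraph.dist_eq_one_iff_adj.mpr h3]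
          omega
  have hsdiff : vol G (ball G v (i + 1) \ ball G v i) + vol G (ball G v i)
      = vol G (ball G v (i + 1)) := Finset.sum_sdiff hsub
  omega

lemma myBall_zero (hG : G.Connected) (v : V) : ball G v 0 = {v} := by
  ext u
  simp only [myMem_ball_iff, Finset.mem_singleton, Nat.le_zero, hG.dist_eq_zero_iff]
  exact eq_comm

lemma myDeg_pos (hG : G.Connected) (hn : 2 ≤ Fintype.card V) (v : V) :
    0 < G.degree v := by
  rw [G.degree_pos_iff_exists_adj]
  obtain ⟨u, hu⟩ := Fintype.exists_ne_of_one_lt_card (by omega) v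
  obtain ⟨p⟩ := hG.preconnected v u
  cases p with
  | nil => exact absurd rfl hu.symm
  | cons h _ => exact ⟨_, h⟩

lemma myVol_univ_le : vol G Finset.univ ≤ Fintype.card V * Fintype.card V := by
  calc vol G Finset.univ ≤ Finset.univ.card * Fintype.card V := by
        apply Finset.sum_le_card_nsmul
        intro x _
        exact (G.degree_lt_card_verts x).le
    _ = Fintype.card V * Fintype.card V := by rw [Finset.card_univ]

end MyAux

/-- If the ball of radius `r` around `v` has volume at most half the total volume, then
some ball of smaller radius around `v` has conductance at most `4 log n / r`. -/
theorem exists_small_conductance_ball (G : SimpleGraph V) [DecidableRel G.Adj]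
    (hG : G.Connected) (hn : 2 ≤ Fintype.card V) (v : V) (r : ℕ) (hr : 0 < r)
    (hvol : (vol G (ball G v r) : ℝ) ≤ (vol G Finset.univ : ℝ) / 2) :
    ∃ i < r, conductance G (ball G v i) ≤ 4 * Real.log (Fintype.card V) / r := by
  by_contra hcon
  push_neg at hcon
  set n : ℕ := Fintype.card V with hn_def
  set c : ℝ := 4 * Real.log n / r with hc_def
  have hn1 : (1 : ℝ) ≤ (n : ℝ) := by exact_mod_cast Nat.one_le_of_lt hn
  have hc0 : 0 ≤ c := by
    apply div_nonneg _ (Nat.cast_nonneg r)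
    have := Real.log_nonneg hn1
    linarith
  have hdeg : 0 < G.degree v := myDeg_pos G hG hn v
  -- for every i ≤ r, vol(ball i) ≤ vol(ball i)ᶜ, so min = vol(ball i)
  have hhalf : ∀ i ≤ r, (vol G (ball G v i) : ℝ) ≤ (vol G (ball G v i)ᶜ : ℝ) := by
    intro i hi
    have h1 : (vol G (ball G v i) : ℝ) ≤ (vol G Finset.univ : ℝ) / 2 := by
      refine le_trans ?_ hvol
      exact_mod_cast myVol_mono G (myBall_mono G v hi)
    have h2 : (vol G (ball G v i) : ℝ) + (vol G (ball G v i)ᶜ : ℝ)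
        = (vol G Finset.univ : ℝ) := by exact_mod_cast myVol_add_compl G (ball G v i)
    linarith
  have hvpos : ∀ i, 0 < (vol G (ball G v i) : ℝ) := by
    intro i
    have hv : v ∈ ball G v i := by
      rw [myMem_ball_iff]
      simp [SimpleGraph.dist_self]
    have : G.degree v ≤ vol G (ball G v i) :=
      Finset.single_le_sum (f := fun u => G.degree u) (fun x _ => Nat.zero_le _) hv
    have : 0 < vol G (ball G v i) := lt_of_lt_of_le hdeg this
    exact_mod_cast this
  -- each step grows by (1+c)
  have hstep : ∀ i < r, (1 + c) * (vol G (ball G v i) : ℝ) ≤ (vol G (ball G v (i+1)) : ℝ) := by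
    intro i hi
    have hφ := hcon i hi
    rw [conductance] at hφ
    have hmin : min ((vol G (ball G v i) : ℝ)) ((vol G (ball G v i)ᶜ : ℝ))
        = (vol G (ball G v i) : ℝ) := min_eq_left (hhalf i hi.le)
    rw [Nat.cast_min] at hφ
    rw [hmin] at hφ
    have hcut : c * (vol G (ball G v i) : ℝ) < (cut G (ball G v i) : ℝ) := by
      rw [lt_div_iff₀ (hvpos i)] at hφ
      linarith
    have hg : (vol G (ball G v i) : ℝ) + (cut G (ball G v i) : ℝ)
        ≤ (vol G (ball G v (i+1)) : ℝ) := by exact_mod_cast myGrowth G hG v i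
    linarith
  -- induction: (1+c)^i ≤ vol(ball i)
  have hind : ∀ i ≤ r, (1 + c) ^ i ≤ (vol G (ball G v i) : ℝ) := by
    intro i
    induction i with
    | zero =>
      intro _
      rw [pow_zero]
      have h' : 0 < vol G (ball G v 0) := by exact_mod_cast hvpos 0
      exact_mod_cast Nat.one_le_iff_ne_zero.mpr h'.ne'
    | succ k ih =>
      intro hk
      have h1 := ih (Nat.le_of_succ_le hk)
      have h2 := hstep k hk
      calc (1 + c) ^ (k + 1) = (1 + c) * (1 + c) ^ k := by ring
        _ ≤ (1 + c) * (vol G (ball G v k) : ℝ) := by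
            apply mul_le_mul_of_nonneg_left h1
            linarith
        _ ≤ _ := h2
  -- c < 1 or c ≥ 1
  rcases lt_or_ge c 1 with hc1 | hc1
  · -- growth gives contradiction
    have hexp : Real.exp (c / 2) ≤ 1 + c := by
      have h1 : -(c / 2) + 1 ≤ Real.exp (-(c / 2)) := Real.add_one_le_exp _
      have h2 : 0 < Real.exp (-(c / 2)) := Real.exp_pos _
      have h3 : Real.exp (c / 2) * Real.exp (-(c / 2)) = 1 := by
        rw [← Real.exp_add]; simp
      have h4 : 0 < Real.exp (c / 2) := Real.exp_pos _
      nlinarith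
    have hpow : (n : ℝ) * n ≤ (1 + c) ^ r := by
      have h1 : Real.exp (c / 2) ^ r ≤ (1 + c) ^ r := by
        apply pow_le_pow_left₀ (Real.exp_pos _).le hexp
      have h2 : Real.exp (c / 2) ^ r = Real.exp (r * (c / 2)) := by
        rw [← Real.exp_nat_mul]
      have h3 : (r : ℝ) * (c / 2) = 2 * Real.log n := by
        rw [hc_def]
        field_simp
        ring
      have h4 : Real.exp (2 * Real.log n) = (n : ℝ) * n := by
        rw [two_mul, Real.exp_add, Real.exp_log (by linarith)]
      rw [h2, h3, h4] at h1
      exact h1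
    have hbig := hind r le_rfl
    have htot : (vol G Finset.univ : ℝ) ≤ (n : ℝ) * n := by
      exact_mod_cast myVol_univ_le G
    nlinarith [hvpos r]
  · -- conductance of ball 0 is at most 1 ≤ c, contradiction
    have h0 := hcon 0 hr
    rw [conductance] at h0
    rw [Nat.cast_min, min_eq_left (hhalf 0 (Nat.zero_le r))] at h0
    have hle : (cut G (ball G v 0) : ℝ) / (vol G (ball G v 0) : ℝ) ≤ 1 := by
      rw [div_le_one (hvpos 0)]
      exact_mod_cast myCut_le_vol G (ball G v 0)
    linarith
end
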